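/- Let X be a real Banach space with the 3.2 intersection property and Y ⊆ X a closed subspace with the strong 3-ball property (in particular, an M-ideal in X with this property). Then the closed unit ball B_Y has the 1½-ball property in X: if B[x, r₁] ∩ B_Y ≠ ∅ and ‖x − y‖ < r₁ + r₂ for some y ∈ B_Y, then B[x, r₁] ∩ B[y, r₂] ∩ B_Y ≠ ∅. -/

import Mathlib

/-- If a real Banach space `X` has the 3.2 intersection property and the
closed subspace `Y` has the strong 3-ball property, then the closed unit ball `B_Y` has
the 1½-ball property in `X`. -/
theorem stmt_17 {X : Type*} [NormedAddCommGroup X] [NormedSpace ℝ X] [CompleteSpace X]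
    (Y : Subspace ℝ X) (hYcl : IsClosed (Y : Set X))
    (h32IP : ∀ (c₁ c₂ c₃ : X) (r₁ r₂ r₃ : ℝ),
      (Metric.closedBall c₁ r₁ ∩ Metric.closedBall c₂ r₂).Nonempty →
      (Metric.closedBall c₁ r₁ ∩ Metric.closedBall c₃ r₃).Nonempty →
      (Metric.closedBall c₂ r₂ ∩ Metric.closedBall c₃ r₃).Nonempty →
      (Metric.closedBall c₁ r₁ ∩ Metric.closedBall c₂ r₂ ∩ Metric.closedBall c₃ r₃).Nonempty)
    (hstrong3ball : ∀ (c₁ c₂ c₃ : X) (r₁ r₂ r₃ : ℝ),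
      (Metric.closedBall c₁ r₁ ∩ (Y : Set X)).Nonempty →
      (Metric.closedBall c₂ r₂ ∩ (Y : Set X)).Nonempty →
      (Metric.closedBall c₃ r₃ ∩ (Y : Set X)).Nonempty →
      (Metric.closedBall c₁ r₁ ∩ Metric.closedBall c₂ r₂ ∩ Metric.closedBall c₃ r₃).Nonempty →
      (Metric.closedBall c₁ r₁ ∩ Metric.closedBall c₂ r₂ ∩ Metric.closedBall c₃ r₃ ∩
        (Y : Set X)).Nonempty) :
    ∀ (x y : X) (r₁ r₂ : ℝ), 0 < r₁ → 0 < r₂ → y ∈ {z : X | z ∈ Y ∧ ‖z‖ ≤ 1} →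
      (Metric.closedBall x r₁ ∩ {z : X | z ∈ Y ∧ ‖z‖ ≤ 1}).Nonempty → ‖x - y‖ < r₁ + r₂ →
      (Metric.closedBall x r₁ ∩ Metric.closedBall y r₂ ∩ {z : X | z ∈ Y ∧ ‖z‖ ≤ 1}).Nonempty := by
  intro x y r₁ r₂ hr₁ hr₂ hy hne hxy
  obtain ⟨w, hw1, hwY, hwN⟩ := hne
  have hyy : y ∈ Metric.closedBall y r₂ := Metric.mem_closedBall_self hr₂.le
  -- point on segment between x and y lies in both balls
  set p : X := x + (r₁ / (r₁ + r₂)) • (y - x) with hp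
  have hrr : 0 < r₁ + r₂ := by linarith
  have hpx : p ∈ Metric.closedBall x r₁ := by
    simp only [Metric.mem_closedBall, dist_eq_norm, hp]
    have : x + (r₁ / (r₁ + r₂)) • (y - x) - x = (r₁ / (r₁ + r₂)) • (y - x) := by abel
    rw [this, norm_smul, Real.norm_eq_abs, abs_of_nonneg (by positivity)]
    rw [div_mul_eq_mul_div, div_le_iff₀ hrr]
    have : ‖y - x‖ = ‖x - y‖ := by rw [← norm_neg]; congr 1; abel
    rw [this]
    nlinarith [norm_nonneg (x - y)]
  have hpy : p ∈ Metric.closedBall y r₂ := by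
    simp only [Metric.mem_closedBall, dist_eq_norm, hp]
    have h1 : x + (r₁ / (r₁ + r₂)) • (y - x) - y = (r₁ / (r₁ + r₂) - 1) • (y - x) := by
      rw [sub_smul, one_smul]; abel_nf
    rw [h1, norm_smul, Real.norm_eq_abs]
    have h2 : r₁ / (r₁ + r₂) - 1 = -(r₂ / (r₁ + r₂)) := by field_simp; ring
    rw [h2, abs_neg, abs_of_nonneg (by positivity)]
    rw [div_mul_eq_mul_div, div_le_iff₀ hrr]
    have : ‖y - x‖ = ‖x - y‖ := by rw [← norm_neg]; congr 1; abel
    rw [this]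
    nlinarith [norm_nonneg (x - y)]
  have htriple : (Metric.closedBall x r₁ ∩ Metric.closedBall y r₂ ∩
      Metric.closedBall (0 : X) 1).Nonempty := by
    apply h32IP x y 0 r₁ r₂ 1
    · exact ⟨p, hpx, hpy⟩
    · exact ⟨w, hw1, by simpa using hwN⟩
    · exact ⟨y, hyy, by simpa using hy.2⟩
  obtain ⟨z, ⟨⟨hz1, hz2⟩, hz3⟩, hzY⟩ :=
    hstrong3ball x y 0 r₁ r₂ 1 ⟨w, hw1, hwY⟩ ⟨y, hyy, hy.1⟩
      ⟨y, by simpa using hy.2, hy.1⟩ htriple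
  exact ⟨z, ⟨hz1, hz2⟩, hzY, by simpa using hz3⟩
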